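/- For every t with 0 ≤ t < 1/6, the derivative of z₀ satisfies z₀′(t) = −(5·d(t)·z₀(t))/(q(t)·c(t)) − (9·a(t)·z₂(t)·z₀(t))/(q(t)·c(t)) − (3·y(t)·z₀(t))/q(t). -/

import Mathlib

noncomputable def pFun (t : ℝ) : ℝ := 1 - 6 * t

noncomputable def rFun (s t : ℝ) : ℝ := Real.exp (-(7776 / 25) * (1 - s) ^ 2 * t ^ 3)

noncomputable def qFun (t : ℝ) : ℝ := pFun t ^ 3 / 6

noncomputable def yFun (t : ℝ) : ℝ := pFun t ^ 2

noncomputable def aFun (s t : ℝ) : ℝ := (5 / 6) * s * (1 - s) ^ 2 * pFun t ^ 5 * rFun s t ^ 2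

noncomputable def c1Fun (s t : ℝ) : ℝ := (5 / 6) * s * (1 - s) * pFun t ^ 2 * rFun s t

noncomputable def c2Fun (s t : ℝ) : ℝ := (5 / 6) * (1 - s) ^ 2 * pFun t ^ 3 * rFun s t ^ 2

noncomputable def cFun (s t : ℝ) : ℝ := c1Fun s t * c2Fun s t

noncomputable def dFun (s t : ℝ) : ℝ := (5 / 6) * s * (1 - s) ^ 3 * pFun t ^ 7 * rFun s t ^ 3

noncomputable def z0Fun (s t : ℝ) : ℝ := (5 / 6) * (1 - s) ^ 5 * pFun t ^ 9 * rFun s t ^ 3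

noncomputable def z1Fun (s t : ℝ) : ℝ := (1 - s) ^ 4 * (1 - pFun t) * pFun t ^ 6 * rFun s t ^ 2

noncomputable def z2Fun (s t : ℝ) : ℝ :=
  (6 / 5) * (1 - s) ^ 3 * (1 - pFun t) ^ 2 * pFun t ^ 3 * rFun s t

lemma pFun_hasDerivAt (t : ℝ) : HasDerivAt pFun (-6) t := by
  have h := ((hasDerivAt_id t).const_mul (6 : ℝ)).const_sub (1 : ℝ)
  show HasDerivAt (fun x : ℝ => 1 - 6 * x) (-6) t
  simpa using h

lemma rFun_hasDerivAt (s t : ℝ) :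
    HasDerivAt (rFun s) (rFun s t * (-(7776 / 25) * (1 - s) ^ 2 * (3 * t ^ 2))) t := by
  have hin : HasDerivAt (fun t : ℝ => -(7776 / 25) * (1 - s) ^ 2 * t ^ 3)
      (-(7776 / 25) * (1 - s) ^ 2 * (3 * t ^ 2)) t := by
    have h := (hasDerivAt_pow 3 t).const_mul (-(7776 / 25) * (1 - s) ^ 2)
    simpa using h
  exact hin.exp

set_option maxHeartbeats 1000000 in
theorem z0_hasDerivAt (s : ℝ) (hs0 : 0 < s) (hs1 : s < 1) (t : ℝ)
    (ht0 : 0 ≤ t) (ht : t < 1 / 6) :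
    HasDerivAt (z0Fun s)
      (-(5 * dFun s t * z0Fun s t) / (qFun t * cFun s t)
        - (9 * aFun s t * z2Fun s t * z0Fun s t) / (qFun t * cFun s t)
        - (3 * yFun t * z0Fun s t) / qFun t) t := by
  have hp := pFun_hasDerivAt t
  have hr := rFun_hasDerivAt s t
  have hp9 := hp.pow 9
  have hr3 := hr.pow 3
  have h := ((hp9.mul hr3).const_mul ((5 / 6) * (1 - s) ^ 5))
  have hfun : (fun y => (5 / 6) * (1 - s) ^ 5 * (pFun ^ 9 * rFun s ^ 3) y) = z0Fun s := by
    funext x; simp [z0Fun]; ring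
  rw [hfun] at h
  refine h.congr_deriv ?_
  have hppos : 0 < pFun t := by unfold pFun; linarith
  have hpne : pFun t ≠ 0 := ne_of_gt hppos
  have hrne : rFun s t ≠ 0 := (Real.exp_pos _).ne'
  have hsne : s ≠ 0 := ne_of_gt hs0
  have hs1ne : (1 : ℝ) - s ≠ 0 := by linarith
  have h1p : (1 : ℝ) - pFun t = 6 * t := by unfold pFun; ring
  simp only [z0Fun, dFun, aFun, z2Fun, qFun, cFun, c1Fun, c2Fun, yFun, h1p, Pi.pow_apply]
  field_simp
  ring
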